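/- (Expectation decoupling for the inner step of FacTBRK.) Let V ∈ ℝ^{m₁×n×p}, let (T_V, prob_V) be a block sampling scheme on the row slices of V with V_ν∗V_ν^⊤ t-invertible for every ν ∈ T_V and largest block size d_{T_V}. Let Z‡ ∈ ℝ^{m₁×l×p} and X‡ ∈ ℝ^{n×l×p} satisfy V∗X‡ = Z‡. Let (Z_ω)_{ω∈Ω} be a finite family in ℝ^{m₁×l×p} with weights q(ω) ≥ 0, Σ_ω q(ω) = 1 (the distribution of the current outer iterate, sampled independently of ν), and let X ∈ ℝ^{n×l×p}. For ω ∈ Ω and ν ∈ T_V define X⁺(ω,ν) = X − V_ν^⊤∗(V_ν∗V_ν^⊤)^{-1}∗(V_ν∗X − (Z_ω)_ν). Then Σ_{ω∈Ω} Σ_{ν∈T_V} q(ω)·prob_V(ν)·‖X⁺(ω,ν) − X‡‖_F² ≤ (1 − σ_min(Σ_{ν∈T_V} prob_V(ν)·bcirc(P_{V_ν})))·‖X − X‡‖_F² + d_{T_V}·p·(Σ_{ν∈T_V} prob_V(ν)·‖(bcirc(V_ν)bcirc(V_ν)^⊤)^{-1}‖₂)·(Σ_{ω∈Ω} q(ω)·‖Z‡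 − Z_ω‖_F²). -/

import Mathlib

open Matrix
open scoped BigOperators

/-- A real third-order tensor with row index `I`, column index `J`, and `p` frontal slices. -/
abbrev Tensor (I J : Type*) (p : ℕ) := I → J → Fin p → ℝ

namespace Tensor

variable {I J K : Type*} {p : ℕ}

/-- Block-circulant matricization: `bcirc A [(i,k),(j,l)] = A i j ((k - l) mod p)`. -/
def bcirc (A : Tensor I J p) : Matrix (I × Fin p) (J × Fin p) ℝ :=
  Matrix.of fun ik jl => A ik.1 jl.1 (ik.2 - jl.2)

/-- Unfolding along the second mode: `unfold B [(j,k), i] = B j i k`. -/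
def unfold {S : Type*} (B : Tensor J S p) : Matrix (J × Fin p) S ℝ :=
  Matrix.of fun jk s => B jk.1 s jk.2

/-- The t-product, the unique tensor with `unfold (A ∗ B) = bcirc A * unfold B`. -/
def tprod [Fintype J] (A : Tensor I J p) (B : Tensor J K p) : Tensor I K p :=
  fun i s k => ∑ j : J, ∑ l : Fin p, A i j (k - l) * B j s l

/-- Tensor transpose: `Aᵀ j i k = A i j ((-k) mod p)`. -/
def ttrans (A : Tensor I J p) : Tensor J I p := fun j i k => A i j (-k)

/-- The identity tensor: first frontal slice is the identity, the others are zero. -/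
def tid (I : Type*) [DecidableEq I] (p : ℕ) : Tensor I I p :=
  fun i j k => if i = j ∧ (k : ℕ) = 0 then 1 else 0

/-- t-invertibility of a square tensor. -/
def TInvertible [Fintype I] [DecidableEq I] (S : Tensor I I p) : Prop :=
  ∃ T : Tensor I I p, tprod S T = tid I p ∧ tprod T S = tid I p

open Classical in
/-- The t-inverse of a square tensor (junk value when not t-invertible). -/
noncomputable def tinv [Fintype I] [DecidableEq I] (S : Tensor I I p) : Tensor I I p :=
  if h : TInvertible S then h.choose else 0

/-- The projection tensor `P_M = Mᵀ ∗ (M ∗ Mᵀ)⁻¹ ∗ M`. -/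
noncomputable def proj [Fintype I] [DecidableEq I] [Fintype J] (M : Tensor I J p) :
    Tensor J J p :=
  tprod (ttrans M) (tprod (tinv (tprod M (ttrans M))) M)

/-- The projection tensor `P_{Mᵀ} = M ∗ (Mᵀ ∗ M)⁻¹ ∗ Mᵀ`. -/
noncomputable def projT [Fintype I] [Fintype J] [DecidableEq J] (M : Tensor I J p) :
    Tensor I I p :=
  tprod M (tprod (tinv (tprod (ttrans M) M)) (ttrans M))

/-- The Frobenius inner product of two tensors. -/
def tinner [Fintype I] [Fintype J] (A B : Tensor I J p) : ℝ :=
  ∑ i : I, ∑ j : J, ∑ k : Fin p, A i j k * B i j k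

/-- The squared Frobenius norm of a tensor. -/
def frobSq [Fintype I] [Fintype J] (A : Tensor I J p) : ℝ :=
  ∑ i : I, ∑ j : J, ∑ k : Fin p, (A i j k) ^ 2

/-- The Frobenius norm of a tensor. -/
noncomputable def frobNorm [Fintype I] [Fintype J] (A : Tensor I J p) : ℝ :=
  Real.sqrt (frobSq A)

/-- The subtensor of the row slices of `U` indexed by `μ`. -/
def rowSub (U : Tensor I J p) (μ : Finset I) : Tensor {i // i ∈ μ} J p :=
  fun i => U i.1

/-- The `j`-th lateral slice of `U`, as an `I × 1 × p` tensor. -/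
def latSlice (U : Tensor I J p) (j : J) : Tensor I (Fin 1) p :=
  fun i _ k => U i j k

/-- One (block) Kaczmarz step for the system with operator `U`, sampled row block `μ`,
current iterate `X` and measurement block `Bμ`:
`X ← X - U_μᵀ ∗ (U_μ ∗ U_μᵀ)⁻¹ ∗ (U_μ ∗ X - Bμ)`. -/
noncomputable def kaczStep [DecidableEq I] [Fintype J] (U : Tensor I J p) (μ : Finset I)
    (X : Tensor J K p) (Bμ : Tensor {i // i ∈ μ} K p) : Tensor J K p :=
  X - tprod (ttrans (rowSub U μ))
    (tprod (tinv (tprod (rowSub U μ) (ttrans (rowSub U μ))))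
      (tprod (rowSub U μ) X - Bμ))

/-- One extended (column-like) step:
`W ← W - U_{:j:} ∗ (U_{:j:}ᵀ ∗ U_{:j:})⁻¹ ∗ (U_{:j:}ᵀ ∗ W)`. -/
noncomputable def extStep [Fintype I] (U : Tensor I J p) (j : J) (W : Tensor I K p) :
    Tensor I K p :=
  W - tprod (latSlice U j)
    (tprod (tinv (tprod (ttrans (latSlice U j)) (latSlice U j)))
      (tprod (ttrans (latSlice U j)) W))

end Tensor

/-- Squared Frobenius norm of a real matrix. -/
def matFrobSq {I J : Type*} [Fintype I] [Fintype J] (A : Matrix I J ℝ) : ℝ :=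
  ∑ i : I, ∑ j : J, (A i j) ^ 2

/-- Spectral norm (largest singular value) of a real matrix, as the supremum of `‖A x‖`
over unit vectors `x`. -/
noncomputable def specNorm {I J : Type*} [Fintype I] [Fintype J] (A : Matrix I J ℝ) : ℝ :=
  sSup {r : ℝ | ∃ x : J → ℝ, (∑ j : J, (x j) ^ 2) = 1 ∧
    r = Real.sqrt (∑ i : I, (A.mulVec x i) ^ 2)}

/-- Smallest eigenvalue of a symmetric real matrix, via the Rayleigh quotient:
`σ_min(S) = inf {xᵀ S x : ‖x‖ = 1}`. -/
noncomputable def minEig {I : Type*} [Fintype I] (S : Matrix I I ℝ) : ℝ :=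
  sInf {r : ℝ | ∃ x : I → ℝ, (∑ i : I, (x i) ^ 2) = 1 ∧
    r = ∑ i : I, x i * S.mulVec x i}

section Aux
open Tensor

variable {I J K S' : Type*} {p : ℕ}

lemma Tensor.unfold_tprod [Fintype J] (A : Tensor I J p) (B : Tensor J S' p) :
    unfold (tprod A B) = bcirc A * unfold B := by
  ext ⟨i, k⟩ s
  simp [unfold, tprod, bcirc, Matrix.mul_apply, Fintype.sum_prod_type]

lemma Tensor.bcirc_tprod [NeZero p] [Fintype J] (A : Tensor I J p) (B : Tensor J K p) :
    bcirc (tprod A B) = bcirc A * bcirc B := by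
  ext ⟨i, k⟩ ⟨j, l⟩
  simp only [bcirc, tprod, Matrix.of_apply, Matrix.mul_apply, Fintype.sum_prod_type]
  refine Finset.sum_congr rfl fun j' _ => ?_
  refine Fintype.sum_equiv (Equiv.addRight l) _ _ fun l' => ?_
  simp only [Equiv.coe_addRight]
  congr 2
  · open Fin.CommRing in ring
  · simp

lemma Tensor.bcirc_ttrans (A : Tensor I J p) : bcirc (ttrans A) = (bcirc A)ᵀ := by
  ext ⟨j, l⟩ ⟨i, k⟩
  simp only [bcirc, ttrans, Matrix.of_apply, Matrix.transpose_apply]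
  congr 1
  haveI : NeZero p := ⟨fun h => by subst h; exact k.elim0⟩
  open Fin.CommRing in ring_nf

lemma Tensor.bcirc_tid [DecidableEq I] : bcirc (tid I p) = 1 := by
  ext ⟨i, k⟩ ⟨j, l⟩
  haveI : NeZero p := ⟨fun h => by subst h; exact k.elim0⟩
  simp only [bcirc, tid, Matrix.of_apply, Matrix.one_apply, Prod.mk.injEq]
  have : ((k - l : Fin p) : ℕ) = 0 ↔ k = l := by
    rw [show (((k - l : Fin p) : ℕ) = 0) ↔ (k - l = 0) from by rw [Fin.ext_iff, Fin.val_zero], sub_eq_zero]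
  by_cases h1 : i = j <;> by_cases h2 : k = l <;> simp [h1, h2, this]

lemma Tensor.unfold_sub (A B : Tensor J K p) : unfold (A - B) = unfold A - unfold B := rfl

end Aux
section Aux2
open Tensor

variable {I J K S' : Type*} {p : ℕ}

/-- Frobenius inner product of matrices, as a trace. -/
noncomputable def matInner {I J : Type*} [Fintype I] [Fintype J] (A B : Matrix I J ℝ) : ℝ :=
  (Aᵀ * B).trace

variable [Fintype I] [Fintype J] [Fintype K]

lemma matInner_apply (A B : Matrix I J ℝ) :
    matInner A B = ∑ i : I, ∑ j : J, A i j * B i j := by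
  simp only [matInner, Matrix.trace, Matrix.diag, Matrix.mul_apply, Matrix.transpose_apply]
  exact Finset.sum_comm

lemma matInner_self (A : Matrix I J ℝ) : matInner A A = matFrobSq A := by
  rw [matInner_apply]
  simp [matFrobSq, sq]

lemma matInner_comm (A B : Matrix I J ℝ) : matInner A B = matInner B A := by
  rw [matInner_apply, matInner_apply]
  exact Finset.sum_congr rfl fun i _ => Finset.sum_congr rfl fun j _ => mul_comm _ _

lemma matInner_mul_left (A : Matrix I J ℝ) (X : Matrix J K ℝ) (Y : Matrix I K ℝ) :
    matInner (A * X) Y = matInner X (Aᵀ * Y) := by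
  simp only [matInner, Matrix.transpose_mul, Matrix.mul_assoc]

lemma matFrobSq_sub (A B : Matrix I J ℝ) :
    matFrobSq (A - B) = matFrobSq A - 2 * matInner A B + matFrobSq B := by
  simp only [← matInner_self, matInner, Matrix.transpose_sub, Matrix.sub_mul,
    Matrix.mul_sub, Matrix.trace_sub]
  have h : (Bᵀ * A).trace = (Aᵀ * B).trace := by
    rw [← Matrix.trace_transpose (Bᵀ * A), Matrix.transpose_mul, Matrix.transpose_transpose]
  ring_nf
  rw [h]
  ring

lemma matInner_sub_left (A B : Matrix I J ℝ) (C : Matrix I J ℝ) :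
    matInner (A - B) C = matInner A C - matInner B C := by
  simp only [matInner, Matrix.transpose_sub, Matrix.sub_mul, Matrix.trace_sub]

lemma matInner_smul_right (c : ℝ) (A B : Matrix I J ℝ) :
    matInner A (c • B) = c * matInner A B := by
  simp only [matInner, Matrix.mul_smul, Matrix.trace_smul, smul_eq_mul]

lemma matInner_sum_right {σ : Type*} (s : Finset σ) (A : Matrix I J ℝ) (f : σ → Matrix I J ℝ) :
    matInner A (∑ x ∈ s, f x) = ∑ x ∈ s, matInner A (f x) := by
  simp only [matInner, Matrix.mul_sum, Matrix.trace_sum]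

/-- Column decomposition of a quadratic form. -/
lemma matInner_mul_self_eq_sum_cols (S : Matrix I I ℝ) (X : Matrix I K ℝ) :
    matInner X (S * X) =
      ∑ s : K, ∑ i : I, X i s * S.mulVec (fun i' => X i' s) i := by
  simp only [matInner, Matrix.trace, Matrix.diag, Matrix.mul_apply, Matrix.transpose_apply,
    Matrix.mulVec, dotProduct]

lemma matFrobSq_eq_sum_cols (X : Matrix I K ℝ) :
    matFrobSq X = ∑ s : K, ∑ i : I, (X i s) ^ 2 := by
  simp only [matFrobSq]
  exact Finset.sum_comm

lemma frobSq_eq_matFrobSq [Fintype S'] (A : Tensor J S' p) :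
    frobSq A = matFrobSq (unfold A) := by
  simp only [frobSq, matFrobSq, unfold, Matrix.of_apply, Fintype.sum_prod_type]
  exact Finset.sum_congr rfl fun j _ => Finset.sum_comm

lemma frobSq_nonneg [Fintype S'] (A : Tensor J S' p) : 0 ≤ frobSq A :=
  Finset.sum_nonneg fun _ _ => Finset.sum_nonneg fun _ _ =>
    Finset.sum_nonneg fun _ _ => sq_nonneg _

end Aux2
section Aux3

variable {I J : Type*} [Fintype I] [Fintype J]

lemma specSet_bddAbove (A : Matrix I J ℝ) :
    BddAbove {r : ℝ | ∃ x : J → ℝ, (∑ j : J, (x j) ^ 2) = 1 ∧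
      r = Real.sqrt (∑ i : I, (A.mulVec x i) ^ 2)} := by
  refine ⟨Real.sqrt (matFrobSq A), fun r hr => ?_⟩
  obtain ⟨x, hx1, rfl⟩ := hr
  refine Real.sqrt_le_sqrt ?_
  have h : ∀ i : I, (A.mulVec x i) ^ 2 ≤ ∑ j : J, (A i j) ^ 2 := by
    intro i
    have := Finset.sum_mul_sq_le_sq_mul_sq Finset.univ (A i) x
    calc (A.mulVec x i) ^ 2 = (∑ j : J, A i j * x j) ^ 2 := rfl
      _ ≤ (∑ j : J, (A i j) ^ 2) * ∑ j : J, (x j) ^ 2 := this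
      _ = ∑ j : J, (A i j) ^ 2 := by rw [hx1, mul_one]
  exact Finset.sum_le_sum fun i _ => h i

lemma quad_le_specNorm (A : Matrix J J ℝ) (x : J → ℝ) :
    ∑ j : J, x j * A.mulVec x j ≤ specNorm A * ∑ j : J, (x j) ^ 2 := by
  set s := ∑ j : J, (x j) ^ 2 with hs
  have hs0 : 0 ≤ s := Finset.sum_nonneg fun _ _ => sq_nonneg _
  rcases eq_or_lt_of_le hs0 with h0 | hpos
  · -- x = 0
    have hx : ∀ j : J, x j = 0 := by
      intro j
      have := (Finset.sum_eq_zero_iff_of_nonneg (fun i _ => sq_nonneg (x i))).mp h0.symm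
      exact pow_eq_zero_iff (two_ne_zero) |>.mp (this j (Finset.mem_univ j))
    have : ∑ j : J, x j * A.mulVec x j = 0 :=
      Finset.sum_eq_zero fun j _ => by rw [hx j, zero_mul]
    rw [this, ← h0, mul_zero]
  · set c := Real.sqrt s with hc
    have hcpos : 0 < c := Real.sqrt_pos.mpr hpos
    have hcc : c * c = s := Real.mul_self_sqrt hs0
    set y : J → ℝ := c⁻¹ • x with hy
    have hy1 : ∑ j : J, (y j) ^ 2 = 1 := by
      simp only [hy, Pi.smul_apply, smul_eq_mul, mul_pow]
      rw [← Finset.mul_sum, ← hs]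
      field_simp
      rw [hc, Real.sq_sqrt hs0]
    have hAy : A.mulVec y = c⁻¹ • A.mulVec x := Matrix.mulVec_smul A c⁻¹ x
    have hq : ∑ j : J, y j * A.mulVec y j = (c⁻¹ * c⁻¹) * ∑ j : J, x j * A.mulVec x j := by
      rw [Finset.mul_sum]
      refine Finset.sum_congr rfl fun j _ => ?_
      rw [hAy]
      simp only [hy, Pi.smul_apply, smul_eq_mul]
      ring
    -- step 1 : q' ≤ sqrt (∑ (A y)^2)
    have hstep1 : ∑ j : J, y j * A.mulVec y j ≤ Real.sqrt (∑ j : J, (A.mulVec y j) ^ 2) := by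
      rcases le_or_gt (∑ j : J, y j * A.mulVec y j) 0 with hneg | hpos2
      · exact hneg.trans (Real.sqrt_nonneg _)
      · rw [Real.le_sqrt hpos2.le (Finset.sum_nonneg fun _ _ => sq_nonneg _)]
        calc (∑ j : J, y j * A.mulVec y j) ^ 2
            ≤ (∑ j : J, (y j) ^ 2) * ∑ j : J, (A.mulVec y j) ^ 2 :=
              Finset.sum_mul_sq_le_sq_mul_sq Finset.univ y (A.mulVec y)
          _ = ∑ j : J, (A.mulVec y j) ^ 2 := by rw [hy1, one_mul]
    have hstep2 : Real.sqrt (∑ j : J, (A.mulVec y j) ^ 2) ≤ specNorm A :=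
      le_csSup (specSet_bddAbove A) ⟨y, hy1, rfl⟩
    have hkey : ∑ j : J, y j * A.mulVec y j ≤ specNorm A := hstep1.trans hstep2
    rw [hq] at hkey
    have hinv : c⁻¹ * c⁻¹ = s⁻¹ := by rw [← mul_inv, hcc]
    rw [hinv] at hkey
    have h2 := mul_le_mul_of_nonneg_left hkey hs0
    have h3 : s * (s⁻¹ * ∑ j : J, x j * A.mulVec x j) = ∑ j : J, x j * A.mulVec x j := by
      field_simp
    rw [h3] at h2
    linarith

lemma specNorm_nonneg [Nonempty J] (A : Matrix I J ℝ) : 0 ≤ specNorm A := by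
  classical
  obtain ⟨j0⟩ := ‹Nonempty J›
  have hmem : Real.sqrt (∑ i : I, (A.mulVec (Pi.single j0 1) i) ^ 2) ∈
      {r : ℝ | ∃ x : J → ℝ, (∑ j : J, (x j) ^ 2) = 1 ∧
        r = Real.sqrt (∑ i : I, (A.mulVec x i) ^ 2)} := by
    refine ⟨Pi.single j0 1, ?_, rfl⟩
    rw [Finset.sum_eq_single j0]
    · simp
    · intro b _ hb; simp [Pi.single_apply, hb]
    · intro h; exact absurd (Finset.mem_univ j0) h
  exact (Real.sqrt_nonneg _).trans (le_csSup (specSet_bddAbove A) hmem)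

lemma minEig_mul_le_quad {S : Matrix J J ℝ}
    (hS : ∀ x : J → ℝ, 0 ≤ ∑ j : J, x j * S.mulVec x j) (x : J → ℝ) :
    minEig S * (∑ j : J, (x j) ^ 2) ≤ ∑ j : J, x j * S.mulVec x j := by
  have hbdd : BddBelow {r : ℝ | ∃ x : J → ℝ, (∑ j : J, (x j) ^ 2) = 1 ∧
      r = ∑ j : J, x j * S.mulVec x j} := by
    refine ⟨0, fun r hr => ?_⟩
    obtain ⟨y, _, rfl⟩ := hr
    exact hS y
  set s := ∑ j : J, (x j) ^ 2 with hs
  have hs0 : 0 ≤ s := Finset.sum_nonneg fun _ _ => sq_nonneg _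
  rcases eq_or_lt_of_le hs0 with h0 | hpos
  · have hx : ∀ j : J, x j = 0 := by
      intro j
      have := (Finset.sum_eq_zero_iff_of_nonneg (fun i _ => sq_nonneg (x i))).mp h0.symm
      exact pow_eq_zero_iff (two_ne_zero) |>.mp (this j (Finset.mem_univ j))
    have hq : ∑ j : J, x j * S.mulVec x j = 0 :=
      Finset.sum_eq_zero fun j _ => by rw [hx j, zero_mul]
    rw [hq, ← h0, mul_zero]
  · set c := Real.sqrt s with hc
    have hcpos : 0 < c := Real.sqrt_pos.mpr hpos
    have hcc : c * c = s := Real.mul_self_sqrt hs0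
    set y : J → ℝ := c⁻¹ • x with hy
    have hy1 : ∑ j : J, (y j) ^ 2 = 1 := by
      simp only [hy, Pi.smul_apply, smul_eq_mul, mul_pow]
      rw [← Finset.mul_sum, ← hs]
      field_simp
      rw [hc, Real.sq_sqrt hs0]
    have hAy : S.mulVec y = c⁻¹ • S.mulVec x := Matrix.mulVec_smul S c⁻¹ x
    have hq : ∑ j : J, y j * S.mulVec y j = (c⁻¹ * c⁻¹) * ∑ j : J, x j * S.mulVec x j := by
      rw [Finset.mul_sum]
      refine Finset.sum_congr rfl fun j _ => ?_
      rw [hAy]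
      simp only [hy, Pi.smul_apply, smul_eq_mul]
      ring
    have hkey : minEig S ≤ (c⁻¹ * c⁻¹) * ∑ j : J, x j * S.mulVec x j := by
      rw [← hq]
      exact csInf_le hbdd ⟨y, hy1, rfl⟩
    have hinv : c⁻¹ * c⁻¹ = s⁻¹ := by rw [← mul_inv, hcc]
    rw [hinv] at hkey
    have h2 := mul_le_mul_of_nonneg_right hkey hs0
    have h3 : s⁻¹ * (∑ j : J, x j * S.mulVec x j) * s = ∑ j : J, x j * S.mulVec x j := by
      field_simp
    rw [h3] at h2
    linarith

end Aux3
section Aux4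
open Tensor

lemma Tensor.tinv_spec {I : Type*} [Fintype I] [DecidableEq I] {p : ℕ} {S : Tensor I I p}
    (h : TInvertible S) :
    tprod S (tinv S) = tid I p ∧ tprod (tinv S) S = tid I p := by
  rw [tinv, dif_pos h]; exact h.choose_spec

variable {p : ℕ} [NeZero p]

lemma core_identity {m₁ n l : ℕ} (V : Tensor (Fin m₁) (Fin n) p) (ν : Finset (Fin m₁))
    (hinv : TInvertible (tprod (rowSub V ν) (ttrans (rowSub V ν))))
    (Zd : Tensor (Fin m₁) (Fin l) p) (Xd X : Tensor (Fin n) (Fin l) p)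
    (hXd : tprod V Xd = Zd) (Zω : Tensor (Fin m₁) (Fin l) p) :
    frobSq (kaczStep V ν X (rowSub Zω ν) - Xd) =
      frobSq (X - Xd)
        - matInner (unfold (X - Xd)) (bcirc (proj (rowSub V ν)) * unfold (X - Xd))
        + matInner (unfold (rowSub (Zd - Zω) ν))
            ((bcirc (rowSub V ν) * (bcirc (rowSub V ν))ᵀ)⁻¹ * unfold (rowSub (Zd - Zω) ν)) := by
  set M := rowSub V ν with hM
  set Mb := bcirc M with hMb
  set C := bcirc (tinv (tprod M (ttrans M))) with hC
  obtain ⟨hr, hl⟩ := Tensor.tinv_spec hinv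
  have h1 : (Mb * Mbᵀ) * C = 1 := by
    have := congrArg bcirc hr
    rwa [bcirc_tprod, bcirc_tprod, bcirc_ttrans, bcirc_tid, ← hMb, ← hC] at this
  have h2 : C * (Mb * Mbᵀ) = 1 := by
    have := congrArg bcirc hl
    rwa [bcirc_tprod, bcirc_tprod, bcirc_ttrans, bcirc_tid, ← hMb, ← hC] at this
  have hCinv : (Mb * Mbᵀ)⁻¹ = C := Matrix.inv_eq_left_inv h2
  have hBsymm : (Mb * Mbᵀ)ᵀ = Mb * Mbᵀ := by
    rw [Matrix.transpose_mul, Matrix.transpose_transpose]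
  have hCt : Cᵀ = C := by
    have ht : Cᵀ * (Mb * Mbᵀ) = 1 := by
      rw [← hBsymm, ← Matrix.transpose_mul, h1, Matrix.transpose_one]
    calc Cᵀ = Cᵀ * ((Mb * Mbᵀ) * C) := by rw [h1, mul_one]
      _ = (Cᵀ * (Mb * Mbᵀ)) * C := by rw [mul_assoc]
      _ = C := by rw [ht, one_mul]
  set E := unfold (X - Xd) with hE
  set R := unfold (rowSub (Zd - Zω) ν) with hR
  set P := Mbᵀ * (C * Mb) with hP
  have hprojP : bcirc (proj M) = P := by
    rw [proj, bcirc_tprod, bcirc_tprod, bcirc_ttrans, ← hMb, ← hC]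
  set G := Mbᵀ * (C * R) with hG
  -- the unfolded update
  have hMXd : Mb * unfold Xd = unfold (rowSub Zd ν) := by
    rw [← unfold_tprod]
    have : tprod M Xd = rowSub (tprod V Xd) ν := rfl
    rw [this, hXd]
  have hMX : Mb * unfold X - unfold (rowSub Zω ν) = Mb * E + R := by
    have hX : unfold X = E + unfold Xd := by
      rw [hE, unfold_sub]; abel
    have hRr : R = unfold (rowSub Zd ν) - unfold (rowSub Zω ν) := by
      rw [hR]
      have : rowSub (Zd - Zω) ν = rowSub Zd ν - rowSub Zω ν := rfl
      rw [this, unfold_sub]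
    rw [hX, Matrix.mul_add, hMXd, hRr]
    abel
  have hU : unfold (kaczStep V ν X (rowSub Zω ν) - Xd) = (E - P * E) - G := by
    rw [unfold_sub, kaczStep, unfold_sub, unfold_tprod, unfold_tprod, unfold_sub,
      unfold_tprod, bcirc_ttrans, ← hM, ← hMb, ← hC, hMX]
    rw [Matrix.mul_add, Matrix.mul_add, hG, hP]
    have hPE : (Mbᵀ * (C * Mb)) * E = Mbᵀ * (C * (Mb * E)) := by
      simp only [Matrix.mul_assoc]
    rw [hPE, hE, unfold_sub]
    abel
  -- matrix algebra facts
  have hPG : P * G = G := by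
    have e1 : P * G = Mbᵀ * (C * (((Mb * Mbᵀ) * C) * R)) := by
      rw [hP, hG]; simp only [Matrix.mul_assoc]
    rw [e1, h1, Matrix.one_mul]
  have hPP : P * P = P := by
    have e1 : P * P = Mbᵀ * (C * (((Mb * Mbᵀ) * C) * Mb)) := by
      rw [hP]; simp only [Matrix.mul_assoc]
    rw [e1, h1, Matrix.one_mul]
  have hPt : Pᵀ = P := by
    rw [hP, Matrix.transpose_mul, Matrix.transpose_mul, Matrix.transpose_transpose, hCt,
      Matrix.mul_assoc]
  -- expansions
  have hcross : matInner (E - P * E) G = 0 := by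
    rw [matInner_sub_left, matInner_mul_left, hPt, hPG, sub_self]
  have hF : matFrobSq (E - P * E) = matFrobSq E - matInner E (P * E) := by
    rw [matFrobSq_sub, ← matInner_self (P * E), matInner_mul_left, hPt,
      ← Matrix.mul_assoc, hPP]
    ring
  have hGnorm : matFrobSq G = matInner R ((Mb * Mbᵀ)⁻¹ * R) := by
    rw [← matInner_self, hG, matInner_mul_left, Matrix.transpose_transpose]
    have e1 : Mb * (Mbᵀ * (C * R)) = ((Mb * Mbᵀ) * C) * R := by
      simp only [Matrix.mul_assoc]
    rw [e1, h1, Matrix.one_mul, matInner_mul_left, hCt, hCinv]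
  have hfs : frobSq (kaczStep V ν X (rowSub Zω ν) - Xd) = matFrobSq ((E - P * E) - G) := by
    rw [frobSq_eq_matFrobSq, hU]
  rw [hfs, matFrobSq_sub, hcross, hF, hGnorm, hprojP, frobSq_eq_matFrobSq (X - Xd), ← hE]
  ring

end Aux4
section Aux5
open Tensor

variable {p : ℕ} [NeZero p]

lemma bcirc_proj_isProj {α J : Type*} [Fintype α] [DecidableEq α] [Fintype J]
    {M : Tensor α J p} (hinv : TInvertible (tprod M (ttrans M))) :
    (bcirc (proj M))ᵀ = bcirc (proj M) ∧
      bcirc (proj M) * bcirc (proj M) = bcirc (proj M) := by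
  set Mb := bcirc M with hMb
  set C := bcirc (tinv (tprod M (ttrans M))) with hC
  obtain ⟨hr, hl⟩ := Tensor.tinv_spec hinv
  have h1 : (Mb * Mbᵀ) * C = 1 := by
    have := congrArg bcirc hr
    rwa [bcirc_tprod, bcirc_tprod, bcirc_ttrans, bcirc_tid, ← hMb, ← hC] at this
  have h2 : C * (Mb * Mbᵀ) = 1 := by
    have := congrArg bcirc hl
    rwa [bcirc_tprod, bcirc_tprod, bcirc_ttrans, bcirc_tid, ← hMb, ← hC] at this
  have hBsymm : (Mb * Mbᵀ)ᵀ = Mb * Mbᵀ := by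
    rw [Matrix.transpose_mul, Matrix.transpose_transpose]
  have hCt : Cᵀ = C := by
    have ht : Cᵀ * (Mb * Mbᵀ) = 1 := by
      rw [← hBsymm, ← Matrix.transpose_mul, h1, Matrix.transpose_one]
    calc Cᵀ = Cᵀ * ((Mb * Mbᵀ) * C) := by rw [h1, mul_one]
      _ = (Cᵀ * (Mb * Mbᵀ)) * C := by rw [mul_assoc]
      _ = C := by rw [ht, one_mul]
  have hprojP : bcirc (proj M) = Mbᵀ * (C * Mb) := by
    rw [proj, bcirc_tprod, bcirc_tprod, bcirc_ttrans, ← hMb, ← hC]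
  constructor
  · rw [hprojP, Matrix.transpose_mul, Matrix.transpose_mul, Matrix.transpose_transpose, hCt,
      Matrix.mul_assoc]
  · rw [hprojP]
    have e1 : (Mbᵀ * (C * Mb)) * (Mbᵀ * (C * Mb)) = Mbᵀ * (C * (((Mb * Mbᵀ) * C) * Mb)) := by
      simp only [Matrix.mul_assoc]
    rw [e1, h1, Matrix.one_mul]

lemma quad_nonneg_of_proj {J : Type*} [Fintype J] {P : Matrix J J ℝ}
    (hPt : Pᵀ = P) (hPP : P * P = P) (x : J → ℝ) :
    0 ≤ ∑ j : J, x j * P.mulVec x j := by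
  have h : P = Pᵀ * P := by rw [hPt, hPP]
  have e1 : ∑ j : J, x j * P.mulVec x j = dotProduct x (P.mulVec x) := rfl
  rw [e1, h, ← Matrix.mulVec_mulVec, Matrix.dotProduct_mulVec, Matrix.vecMul_transpose]
  exact Finset.sum_nonneg fun j _ => mul_self_nonneg _

lemma frobSq_rowSub_le {m₁ : ℕ} {J : Type*} [Fintype J] (U : Tensor (Fin m₁) J p)
    (ν : Finset (Fin m₁)) : frobSq (rowSub U ν) ≤ frobSq U := by
  simp only [frobSq, rowSub]
  rw [Finset.sum_coe_sort ν (fun i => ∑ j : J, ∑ k : Fin p, (U i j k) ^ 2)]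
  exact Finset.sum_le_sum_of_subset_of_nonneg (Finset.subset_univ ν)
    (fun i _ _ => Finset.sum_nonneg fun _ _ => Finset.sum_nonneg fun _ _ => sq_nonneg _)

end Aux5
open Tensor in
/-- expectation decoupling for the inner step of FacTBRK, where
`X⁺(ω,ν) = X − V_νᵀ∗(V_ν∗V_νᵀ)⁻¹∗(V_ν∗X − (Z_ω)_ν)` and `V∗X‡ = Z‡`. -/
theorem stmt11 {m₁ n l p : ℕ} (V : Tensor (Fin m₁) (Fin n) p)
    (TV : Finset (Finset (Fin m₁))) (hTVne : ∀ ν ∈ TV, ν.Nonempty)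
    (probV : Finset (Fin m₁) → ℝ) (hprob : ∀ ν ∈ TV, 0 ≤ probV ν)
    (hprobsum : ∑ ν ∈ TV, probV ν = 1)
    (hinv : ∀ ν ∈ TV, TInvertible (tprod (rowSub V ν) (ttrans (rowSub V ν))))
    (Zd : Tensor (Fin m₁) (Fin l) p) (Xd : Tensor (Fin n) (Fin l) p)
    (hXd : tprod V Xd = Zd)
    {Ω : Type*} [Fintype Ω] (Zfam : Ω → Tensor (Fin m₁) (Fin l) p)
    (qw : Ω → ℝ) (hqw : ∀ ω, 0 ≤ qw ω) (hqwsum : ∑ ω, qw ω = 1)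
    (X : Tensor (Fin n) (Fin l) p) :
    ∑ ω : Ω, ∑ ν ∈ TV, qw ω * probV ν *
        frobSq (kaczStep V ν X (rowSub (Zfam ω) ν) - Xd) ≤
      (1 - minEig (∑ ν ∈ TV, probV ν • bcirc (proj (rowSub V ν)))) * frobSq (X - Xd) +
        ((TV.sup Finset.card : ℕ) : ℝ) * p *
          (∑ ν ∈ TV, probV ν * specNorm ((bcirc (rowSub V ν) * (bcirc (rowSub V ν))ᵀ)⁻¹)) *
          (∑ ω : Ω, qw ω * frobSq (Zd - Zfam ω)) := by
  classical
  rcases Nat.eq_zero_or_pos p with hp | hp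
  · subst hp
    simp [frobSq]
  haveI : NeZero p := ⟨hp.ne'⟩
  -- TV is nonempty
  have hTVnon : TV.Nonempty := by
    by_contra h
    rw [Finset.not_nonempty_iff_eq_empty] at h
    rw [h, Finset.sum_empty] at hprobsum
    exact one_ne_zero hprobsum.symm
  -- notation
  set E := unfold (X - Xd) with hE
  set f := frobSq (X - Xd) with hf
  set Sbar := ∑ ν ∈ TV, probV ν • bcirc (proj (rowSub V ν)) with hSbar
  set a : Finset (Fin m₁) → ℝ :=
    fun ν => matInner E (bcirc (proj (rowSub V ν)) * E) with ha
  set b : Ω → Finset (Fin m₁) → ℝ := fun ω ν =>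
    matInner (unfold (rowSub (Zd - Zfam ω) ν))
      ((bcirc (rowSub V ν) * (bcirc (rowSub V ν))ᵀ)⁻¹ * unfold (rowSub (Zd - Zfam ω) ν))
    with hb
  set sN : Finset (Fin m₁) → ℝ :=
    fun ν => specNorm ((bcirc (rowSub V ν) * (bcirc (rowSub V ν))ᵀ)⁻¹) with hsN
  set z : Ω → ℝ := fun ω => frobSq (Zd - Zfam ω) with hz
  set A := ∑ ν ∈ TV, probV ν * a ν with hA
  -- Step 1 : exact decomposition of the left-hand side
  have step1 : ∑ ω : Ω, ∑ ν ∈ TV, qw ω * probV ν *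
        frobSq (kaczStep V ν X (rowSub (Zfam ω) ν) - Xd)
      = f - A + ∑ ω : Ω, ∑ ν ∈ TV, qw ω * probV ν * b ω ν := by
    have e1 : ∀ ω : Ω, ∑ ν ∈ TV, qw ω * probV ν *
          frobSq (kaczStep V ν X (rowSub (Zfam ω) ν) - Xd)
        = qw ω * f - qw ω * A + ∑ ν ∈ TV, qw ω * probV ν * b ω ν := by
      intro ω
      have e2 : ∀ ν ∈ TV, qw ω * probV ν *
            frobSq (kaczStep V ν X (rowSub (Zfam ω) ν) - Xd)
          = qw ω * (probV ν * f) - qw ω * (probV ν * a ν) + qw ω * probV ν * b ω ν := by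
        intro ν hν
        rw [core_identity V ν (hinv ν hν) Zd Xd X hXd (Zfam ω)]
        ring
      rw [Finset.sum_congr rfl e2, Finset.sum_add_distrib, Finset.sum_sub_distrib,
        ← Finset.mul_sum, ← Finset.mul_sum, ← Finset.sum_mul, hprobsum, one_mul, ← hA]
    rw [Finset.sum_congr rfl (fun ω _ => e1 ω), Finset.sum_add_distrib,
      Finset.sum_sub_distrib, ← Finset.sum_mul, ← Finset.sum_mul, hqwsum, one_mul, one_mul]
  -- Step 2 : A = matInner E (Sbar * E) ≥ minEig Sbar * f
  have hAeq : A = matInner E (Sbar * E) := by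
    rw [hSbar, Matrix.sum_mul, matInner_sum_right]
    refine (Finset.sum_congr rfl fun ν _ => ?_).symm
    rw [Matrix.smul_mul, matInner_smul_right]
  have hSbarQuad : ∀ x : (Fin n × Fin p) → ℝ, 0 ≤ ∑ j, x j * Sbar.mulVec x j := by
    intro x
    have e3 : ∀ j, Sbar.mulVec x j = ∑ ν ∈ TV, probV ν * (bcirc (proj (rowSub V ν))).mulVec x j := by
      intro j
      simp only [hSbar, Matrix.mulVec, dotProduct, Matrix.sum_apply,
        Matrix.smul_apply, smul_eq_mul, Finset.sum_mul, Finset.mul_sum]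
      refine Finset.sum_comm.trans ?_
      exact Finset.sum_congr rfl fun ν _ => Finset.sum_congr rfl fun i _ => by ring
    have e4 : ∑ j, x j * Sbar.mulVec x j
        = ∑ ν ∈ TV, probV ν * ∑ j, x j * (bcirc (proj (rowSub V ν))).mulVec x j := by
      simp only [e3, Finset.mul_sum]
      rw [Finset.sum_comm (β := ℝ)]
      refine Finset.sum_congr rfl fun ν _ => Finset.sum_congr rfl fun j _ => by ring
    rw [e4]
    refine Finset.sum_nonneg fun ν hν => mul_nonneg (hprob ν hν) ?_
    obtain ⟨hPt, hPP⟩ := bcirc_proj_isProj (hinv ν hν)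
    exact quad_nonneg_of_proj hPt hPP x
  have step2 : minEig Sbar * f ≤ A := by
    rw [hAeq, matInner_mul_self_eq_sum_cols]
    have hfE : f = ∑ s : Fin l, ∑ i, (E i s) ^ 2 := by
      rw [hf, frobSq_eq_matFrobSq, matFrobSq_eq_sum_cols, hE]
    rw [hfE, Finset.mul_sum]
    refine Finset.sum_le_sum fun s _ => ?_
    exact minEig_mul_le_quad hSbarQuad (fun i => E i s)
  -- Step 3 : bound the noise term
  have hsNnonneg : ∀ ν ∈ TV, 0 ≤ sN ν := by
    intro ν hν
    haveI : Nonempty ({i // i ∈ ν} × Fin p) := by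
      obtain ⟨i, hi⟩ := hTVne ν hν
      exact ⟨⟨⟨i, hi⟩, ⟨0, hp⟩⟩⟩
    exact specNorm_nonneg _
  have hznonneg : ∀ ω, 0 ≤ z ω := fun ω => frobSq_nonneg _
  have hbbound : ∀ ω : Ω, ∀ ν ∈ TV, b ω ν ≤ sN ν * z ω := by
    intro ω ν hν
    have e5 : b ω ν = ∑ s : Fin l, ∑ i, (unfold (rowSub (Zd - Zfam ω) ν)) i s *
        ((bcirc (rowSub V ν) * (bcirc (rowSub V ν))ᵀ)⁻¹).mulVec
          (fun i' => (unfold (rowSub (Zd - Zfam ω) ν)) i' s) i := by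
      rw [hb]; exact matInner_mul_self_eq_sum_cols _ _
    have e6 : frobSq (rowSub (Zd - Zfam ω) ν)
        = ∑ s : Fin l, ∑ i, ((unfold (rowSub (Zd - Zfam ω) ν)) i s) ^ 2 := by
      rw [frobSq_eq_matFrobSq, matFrobSq_eq_sum_cols]
    calc b ω ν ≤ ∑ s : Fin l, sN ν * ∑ i, ((unfold (rowSub (Zd - Zfam ω) ν)) i s) ^ 2 := by
          rw [e5]
          exact Finset.sum_le_sum fun s _ => quad_le_specNorm _ _
      _ = sN ν * frobSq (rowSub (Zd - Zfam ω) ν) := by rw [e6, Finset.mul_sum]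
      _ ≤ sN ν * z ω := by
          exact mul_le_mul_of_nonneg_left (frobSq_rowSub_le _ _) (hsNnonneg ν hν)
  have step3 : ∑ ω : Ω, ∑ ν ∈ TV, qw ω * probV ν * b ω ν
      ≤ (∑ ν ∈ TV, probV ν * sN ν) * (∑ ω : Ω, qw ω * z ω) := by
    have e7 : ∑ ω : Ω, ∑ ν ∈ TV, qw ω * probV ν * b ω ν
        ≤ ∑ ω : Ω, ∑ ν ∈ TV, qw ω * probV ν * (sN ν * z ω) :=
      Finset.sum_le_sum fun ω _ => Finset.sum_le_sum fun ν hν =>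
        mul_le_mul_of_nonneg_left (hbbound ω ν hν)
          (mul_nonneg (hqw ω) (hprob ν hν))
    refine e7.trans (le_of_eq ?_)
    calc ∑ ω : Ω, ∑ ν ∈ TV, qw ω * probV ν * (sN ν * z ω)
        = ∑ ν ∈ TV, ∑ ω : Ω, qw ω * probV ν * (sN ν * z ω) := Finset.sum_comm
      _ = ∑ ν ∈ TV, (probV ν * sN ν) * ∑ ω : Ω, qw ω * z ω := by
          refine Finset.sum_congr rfl fun ν _ => ?_
          rw [Finset.mul_sum]
          exact Finset.sum_congr rfl fun ω _ => by ring
      _ = (∑ ν ∈ TV, probV ν * sN ν) * ∑ ω : Ω, qw ω * z ω := (Finset.sum_mul _ _ _).symm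
  -- nonnegativity of the two factors
  have hSsum : 0 ≤ ∑ ν ∈ TV, probV ν * sN ν :=
    Finset.sum_nonneg fun ν hν => mul_nonneg (hprob ν hν) (hsNnonneg ν hν)
  have hZsum : 0 ≤ ∑ ω : Ω, qw ω * z ω :=
    Finset.sum_nonneg fun ω _ => mul_nonneg (hqw ω) (hznonneg ω)
  -- 1 ≤ d * p
  have hdp : (1 : ℝ) ≤ ((TV.sup Finset.card : ℕ) : ℝ) * p := by
    obtain ⟨ν₀, hν₀⟩ := hTVnon
    have h1 : 1 ≤ TV.sup Finset.card :=
      le_trans (Finset.card_pos.mpr (hTVne ν₀ hν₀)) (Finset.le_sup hν₀)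
    have hd1 : (1 : ℝ) ≤ ((TV.sup Finset.card : ℕ) : ℝ) := by exact_mod_cast h1
    have hp1 : (1 : ℝ) ≤ (p : ℝ) := by exact_mod_cast hp
    nlinarith
  have h1' := mul_le_mul_of_nonneg_right hdp hSsum
  have h2' := mul_le_mul_of_nonneg_right h1' hZsum
  rw [one_mul] at h2'
  show ∑ ω : Ω, ∑ ν ∈ TV, qw ω * probV ν *
        frobSq (kaczStep V ν X (rowSub (Zfam ω) ν) - Xd) ≤
      (1 - minEig Sbar) * f +
        ((TV.sup Finset.card : ℕ) : ℝ) * p * (∑ ν ∈ TV, probV ν * sN ν) *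
          (∑ ω : Ω, qw ω * z ω)
  linarith [step1, step2, step3, h2']
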